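/- Let b ∈ ℝ, let Γ := {(t, 0) : t ≥ 0} ⊂ ℝ², and for x ∈ ℝ² \ Γ let arg(x) ∈ (0, 2π) be the unique angle with x = |x| (cos(arg x), sin(arg x)). Define ξ : ℝ² \ Γ → ℝ² by ξ(x) := ( x₁ − (b/(2π)) arg(x), x₂ ). Then there exists R₀ > 0 (depending only on b) such that for every R ≥ R₀, every point y ∈ ℝ² \ Γ with |y| ≥ R/2 lies in the image ξ( {x ∈ ℝ² \ Γ : |x| ≥ R/4} ). -/

import Mathlib

/-- The Euclidean norm on `ℝ²` (written as `ℝ × ℝ`). -/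
noncomputable def nrm2 (x : ℝ × ℝ) : ℝ := Real.sqrt (x.1 ^ 2 + x.2 ^ 2)

/-- The branch cut `Γ = {(t, 0) : t ≥ 0}`. -/
def branchCut : Set (ℝ × ℝ) := {x | 0 ≤ x.1 ∧ x.2 = 0}

lemma nrm2_pos {x : ℝ × ℝ} (hx : x ∉ branchCut) : 0 < nrm2 x := by
  have hx' : ¬ (0 ≤ x.1 ∧ x.2 = 0) := hx
  push_neg at hx'
  apply Real.sqrt_pos.mpr
  rcases eq_or_ne x.2 0 with h | h
  · have h1 : x.1 < 0 := by
      by_contra h2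
      exact hx' (le_of_not_gt h2) h
    nlinarith [sq_nonneg x.2]
  · have : 0 < x.2 ^ 2 := by positivity
    nlinarith [sq_nonneg x.1]

lemma abs_fst_le_nrm2 (x : ℝ × ℝ) : |x.1| ≤ nrm2 x := by
  rw [nrm2, ← Real.sqrt_sq_eq_abs]
  exact Real.sqrt_le_sqrt (by nlinarith [sq_nonneg x.2])

lemma abs_snd_le_nrm2 (x : ℝ × ℝ) : |x.2| ≤ nrm2 x := by
  rw [nrm2, ← Real.sqrt_sq_eq_abs]
  exact Real.sqrt_le_sqrt (by nlinarith [sq_nonneg x.1])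

/-- **Range of the dislocation coordinate change** (Lemma B.2(b)): with
`arg(x) ∈ (0, 2π)` the unique angle of `x ∉ Γ` and `ξ(x) = (x₁ − (b/2π) arg x, x₂)`,
there is `R₀ > 0` depending only on `b` such that for all `R ≥ R₀`, every `y ∉ Γ` with
`|y| ≥ R/2` lies in the image `ξ({x ∉ Γ : |x| ≥ R/4})`. -/
theorem stmt15 (b : ℝ) :
    ∃ R₀ : ℝ, 0 < R₀ ∧
      ∀ A : ℝ × ℝ → ℝ,
        (∀ x : ℝ × ℝ, x ∉ branchCut →
          A x ∈ Set.Ioo 0 (2 * Real.pi) ∧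
          x.1 = nrm2 x * Real.cos (A x) ∧ x.2 = nrm2 x * Real.sin (A x)) →
        ∀ R : ℝ, R₀ ≤ R →
          ∀ y : ℝ × ℝ, y ∉ branchCut → R / 2 ≤ nrm2 y →
            ∃ x : ℝ × ℝ, x ∉ branchCut ∧ R / 4 ≤ nrm2 x ∧
              (x.1 - b / (2 * Real.pi) * A x, x.2) = y := by
  have pi_pos := Real.pi_pos
  refine ⟨7 * |b| + 1, by positivity, ?_⟩
  intro A hA R hR y hy hny
  have hRb : 7 * |b| + 1 ≤ R := hR
  have hRpos : 0 < R := by linarith [abs_nonneg b]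
  set c : ℝ := b / (2 * Real.pi) with hc
  have hcb : ∀ a : ℝ, 0 ≤ a → a ≤ 2 * Real.pi → |c * a| ≤ |b| := by
    intro a ha ha2
    rw [abs_mul, hc, abs_div, abs_of_pos (by positivity : (0:ℝ) < 2 * Real.pi),
      abs_of_nonneg ha, div_mul_eq_mul_div, div_le_iff₀ (by positivity)]
    nlinarith [abs_nonneg b]
  by_cases hy2 : y.2 = 0
  · -- y on the negative real axis
    have hy1 : y.1 < 0 := by
      by_contra h; push_neg at h; exact hy ⟨h, hy2⟩
    have hnyy : nrm2 y = -y.1 := by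
      rw [nrm2, hy2]
      rw [show y.1 ^ 2 + (0:ℝ) ^ 2 = y.1 ^ 2 by ring, Real.sqrt_sq_eq_abs,
        abs_of_neg hy1]
    have hny' : R / 2 ≤ -y.1 := by rw [← hnyy]; exact hny
    set x : ℝ × ℝ := (y.1 + b / 2, 0) with hxdef
    have hx1 : x.1 < 0 := by
      simp only [hxdef]
      have := le_abs_self b
      linarith
    have hxC : x ∉ branchCut := fun h => absurd h.1 (not_le.mpr hx1)
    obtain ⟨⟨hA0, hA2π⟩, hcos, hsin⟩ := hA x hxC
    have hnx : 0 < nrm2 x := nrm2_pos hxC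
    have hsin0 : Real.sin (A x) = 0 := by
      have hx2 : x.2 = 0 := rfl
      rw [hx2] at hsin
      rcases mul_eq_zero.mp hsin.symm with h | h
      · exact absurd h hnx.ne'
      · exact h
    have hAπ : A x = Real.pi := by
      rcases Real.sin_eq_zero_iff.mp hsin0 with ⟨n, hn⟩
      have hn1 : (0:ℝ) < n := by nlinarith
      have hn2 : (n:ℝ) < 2 := by nlinarith
      have : n = 1 := by
        have h1 : 0 < n := by exact_mod_cast hn1
        have h2 : n < 2 := by exact_mod_cast hn2
        omega
      rw [this] at hn
      simpa using hn.symm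
    refine ⟨x, hxC, ?_, ?_⟩
    · have : nrm2 x = -x.1 := by
        rw [nrm2, show x.2 = (0:ℝ) from rfl]
        rw [show x.1 ^ 2 + (0:ℝ) ^ 2 = x.1 ^ 2 by ring, Real.sqrt_sq_eq_abs,
          abs_of_neg hx1]
      rw [this]
      simp only [hxdef]
      have := neg_abs_le b
      have := le_abs_self b
      linarith
    · have hfst : x.1 - c * A x = y.1 := by
        rw [hAπ, hc]
        simp only [hxdef]
        field_simp
        ring
      have : (x.1 - c * A x, x.2) = (y.1, y.2) := by
        rw [hfst, show x.2 = (0:ℝ) from rfl, hy2]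
      rw [this]
  · -- y off the real axis
    set s : ℝ → ℝ := fun t => Real.sqrt (t ^ 2 + y.2 ^ 2) with hs
    have hden : ∀ t : ℝ, 0 < s t := by
      intro t
      apply Real.sqrt_pos.mpr
      have : 0 < y.2 ^ 2 := by positivity
      nlinarith [sq_nonneg t]
    set F : ℝ → ℝ := fun t => Real.arccos (t / s t) with hF
    set F' : ℝ → ℝ := fun t => if 0 < y.2 then F t else 2 * Real.pi - F t with hF'
    have hnot : ∀ t : ℝ, (t, y.2) ∉ branchCut := fun t h => hy2 h.2
    have hnrmt : ∀ t : ℝ, nrm2 (t, y.2) = s t := fun t => rfl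
    have hFrange : ∀ t : ℝ, 0 ≤ F' t ∧ F' t ≤ 2 * Real.pi := by
      intro t
      have h1 := Real.arccos_nonneg (t / s t)
      have h2 := Real.arccos_le_pi (t / s t)
      simp only [hF']
      split <;> constructor <;> [skip; skip; skip; skip] <;> linarith
    have hAeq : ∀ t : ℝ, A (t, y.2) = F' t := by
      intro t
      obtain ⟨⟨h0, h2π⟩, hcos, hsin⟩ := hA (t, y.2) (hnot t)
      rw [hnrmt] at hcos hsin
      have hn := hden t
      have hcos' : Real.cos (A (t, y.2)) = t / s t :=
        eq_div_of_mul_eq hn.ne' (by rw [mul_comm]; exact hcos.symm)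
      have hsin' : Real.sin (A (t, y.2)) = y.2 / s t :=
        eq_div_of_mul_eq hn.ne' (by rw [mul_comm]; exact hsin.symm)
      by_cases hpos : 0 < y.2
      · have hsp : 0 < Real.sin (A (t, y.2)) := by
          rw [hsin']; exact div_pos hpos hn
        have hlt : A (t, y.2) < Real.pi := by
          by_contra h
          push_neg at h
          have : Real.sin (A (t, y.2) - Real.pi) ≥ 0 :=
            Real.sin_nonneg_of_nonneg_of_le_pi (by linarith) (by linarith)
          rw [Real.sin_sub_pi] at this
          linarith
        have : Real.arccos (Real.cos (A (t, y.2))) = A (t, y.2) :=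
          Real.arccos_cos h0.le hlt.le
        simp only [hF', if_pos hpos, hF]
        rw [← hcos', this]
      · have hneg : y.2 < 0 := lt_of_le_of_ne (not_lt.mp hpos) hy2
        have hsn : Real.sin (A (t, y.2)) < 0 := by
          rw [hsin']; exact div_neg_of_neg_of_pos hneg hn
        have hgt : Real.pi < A (t, y.2) := by
          by_contra h
          push_neg at h
          have : 0 ≤ Real.sin (A (t, y.2)) :=
            Real.sin_nonneg_of_nonneg_of_le_pi h0.le h
          linarith
        have hcoseq : Real.cos (2 * Real.pi - A (t, y.2)) = Real.cos (A (t, y.2)) := by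
          rw [show 2 * Real.pi - A (t, y.2) = -(A (t, y.2) - 2 * Real.pi) by ring,
            Real.cos_neg, Real.cos_sub_two_pi]
        have : Real.arccos (Real.cos (A (t, y.2))) = 2 * Real.pi - A (t, y.2) := by
          rw [← hcoseq]
          exact Real.arccos_cos (by linarith) (by linarith)
        simp only [hF', if_neg hpos, hF]
        rw [← hcos', this]
        ring
    set g : ℝ → ℝ := fun t => t - c * F' t with hg
    have hcont : Continuous g := by
      have hsc : Continuous s :=
        Real.continuous_sqrt.comp ((continuous_pow 2).add continuous_const)
      have hFc : Continuous F := by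
        apply Real.continuous_arccos.comp
        exact continuous_id.div hsc fun t => (hden t).ne'
      have hF'c : Continuous F' := by
        simp only [hF']
        split
        · exact hFc
        · exact continuous_const.sub hFc
      exact continuous_id.sub (continuous_const.mul hF'c)
    have hgl : g (y.1 - |b| - 1) ≤ y.1 := by
      have h1 := hFrange (y.1 - |b| - 1)
      have h2 := hcb _ h1.1 h1.2
      have h3 := neg_abs_le (c * F' (y.1 - |b| - 1))
      simp only [hg]
      linarith
    have hgr : y.1 ≤ g (y.1 + |b| + 1) := by
      have h1 := hFrange (y.1 + |b| + 1)
      have h2 := hcb _ h1.1 h1.2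
      have h3 := le_abs_self (c * F' (y.1 + |b| + 1))
      simp only [hg]
      linarith
    obtain ⟨t, _, hgt⟩ :=
      intermediate_value_Icc (by linarith [abs_nonneg b]) hcont.continuousOn
        (Set.mem_Icc.mpr ⟨hgl, hgr⟩)
    set x : ℝ × ℝ := (t, y.2) with hxdef
    have hxC : x ∉ branchCut := hnot t
    have hAx : A x = F' t := hAeq t
    have hfst : x.1 - c * A x = y.1 := by
      rw [hAx]
      exact hgt
    have hty : |t - y.1| ≤ |b| := by
      have h1 : t - y.1 = c * F' t := by
        have : t - c * F' t = y.1 := hgt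
        linarith
      rw [h1]
      exact hcb _ (hFrange t).1 (hFrange t).2
    refine ⟨x, hxC, ?_, ?_⟩
    · rcases le_or_gt (3 * R / 10) |y.2| with h | h
      · have := abs_snd_le_nrm2 x
        have : |y.2| ≤ nrm2 x := this
        linarith
      · have hsq : (R / 2) ^ 2 ≤ y.1 ^ 2 + y.2 ^ 2 := by
          have h1 := Real.sq_sqrt (show (0:ℝ) ≤ y.1 ^ 2 + y.2 ^ 2 by positivity)
          have h2 : R / 2 ≤ Real.sqrt (y.1 ^ 2 + y.2 ^ 2) := hny
          nlinarith [Real.sqrt_nonneg (y.1 ^ 2 + y.2 ^ 2)]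
        have hy1 : 2 * R / 5 ≤ |y.1| := by
          nlinarith [sq_abs y.1, sq_abs y.2, abs_nonneg y.1, abs_nonneg y.2]
        have htabs : 2 * R / 5 - |b| ≤ |t| := by
          have := abs_sub_abs_le_abs_sub y.1 t
          rw [abs_sub_comm] at this
          linarith
        have := abs_fst_le_nrm2 x
        have hxt : |t| ≤ nrm2 x := this
        linarith
    · have : (x.1 - c * A x, x.2) = (y.1, y.2) := by
        rw [hfst]
      rw [this]
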